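/- Let F = (X_1, …, X_n) with X_i ∈ ℝ^{d×d_i} be a matrix frame, c = (c_1,…,c_n) ∈ ℚ^n_{>0} with ∑_{i=1}^n c_i = d, and t* ∈ ℝ^n such that (e^{t*_1},…,e^{t*_n}) ∈ 𝕍(F,c). Set Q(t*) = ∑_{i=1}^n e^{t*_i} X_i·X_iᵀ and let Q(t*)^{−1/2} be the inverse of the positive-definite square root of Q(t*). Then Q(t*)^{−1/2} transforms (F,c) into a radial isotropic frame, i.e. each Q(t*)^{−1/2}·X_i is nonzero and ∑_{i=1}^n c_i·(Q(t*)^{−1/2}·X_i)(Q(t*)^{−1/2}·X_i)ᵀ/‖Q(t*)^{−1/2}·X_i‖_F² = I_d. -/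

import Mathlib

open scoped BigOperators
open Matrix

/-- The positive semidefinite square root of a positive semidefinite matrix (removed from
Mathlib; restated here with its former definition). -/
noncomputable def Matrix.PosSemidef.sqrt {n 𝕜 : Type*} [Fintype n] [RCLike 𝕜] [PartialOrder 𝕜] [DecidableEq n]
    {A : Matrix n n 𝕜} (hA : A.PosSemidef) : Matrix n n 𝕜 :=
  hA.1.eigenvectorUnitary.1 * diagonal ((↑) ∘ (√·) ∘ hA.1.eigenvalues) *
  (star hA.1.eigenvectorUnitary : Matrix n n 𝕜)

namespace MFrames

/-- The squared Frobenius norm of a real matrix. -/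
noncomputable def frobSq {α β : Type*} [Fintype α] [Fintype β] (X : Matrix α β ℝ) : ℝ :=
  ∑ i, ∑ j, X i j ^ 2

variable {d n : ℕ} {m : Fin n → ℕ}

/-- Squared distance between two tuples of matrices. -/
noncomputable def dist2 (F G : ∀ i : Fin n, Matrix (Fin d) (Fin (m i)) ℝ) : ℝ :=
  ∑ i, frobSq (F i - G i)

/-- The frame operator `∑ Xᵢ Xᵢᵀ`. -/
noncomputable def frameOp (F : ∀ i : Fin n, Matrix (Fin d) (Fin (m i)) ℝ) :
    Matrix (Fin d) (Fin d) ℝ :=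
  ∑ i, F i * (F i)ᵀ

/-- `F` is a matrix frame: `∑ Xᵢ Xᵢᵀ` is positive definite. -/
def IsMatrixFrame (F : ∀ i : Fin n, Matrix (Fin d) (Fin (m i)) ℝ) : Prop :=
  (frameOp F).PosDef

/-- `F` is an ε-nearly equal-norm Parseval matrix frame. -/
def NearlyENParseval (ε : ℝ) (F : ∀ i : Fin n, Matrix (Fin d) (Fin (m i)) ℝ) : Prop :=
  (frameOp F - (1 - ε) • (1 : Matrix (Fin d) (Fin d) ℝ)).PosSemidef ∧
  ((1 + ε) • (1 : Matrix (Fin d) (Fin d) ℝ) - frameOp F).PosSemidef ∧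
  ∀ i, (1 - ε) * ((d : ℝ) / n) ≤ frobSq (F i) ∧ frobSq (F i) ≤ (1 + ε) * ((d : ℝ) / n)

/-- `F` is an equal-norm Parseval matrix frame. -/
def EqualNormParseval (F : ∀ i : Fin n, Matrix (Fin d) (Fin (m i)) ℝ) : Prop :=
  frameOp F = 1 ∧ ∀ i, frobSq (F i) = (d : ℝ) / n

/-- The columns of the concatenated matrix `[X₁ | … | Xₙ]`. -/
def col (F : ∀ i : Fin n, Matrix (Fin d) (Fin (m i)) ℝ) (p : (i : Fin n) × Fin (m i)) :
    Fin d → ℝ :=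
  fun r => F p.1 r p.2

/-- `F` is generic: `n > d` and any `d` of the columns of `[X₁ | … | Xₙ]` are linearly
independent (hence a basis of `ℝ^d`). -/
def Generic (F : ∀ i : Fin n, Matrix (Fin d) (Fin (m i)) ℝ) : Prop :=
  d < n ∧ ∀ S : Finset ((i : Fin n) × Fin (m i)), S.card = d →
    LinearIndependent ℝ (fun p : S => col F (p : (i : Fin n) × Fin (m i)))

/-- Column span of a matrix. -/
def colSpan {k : ℕ} (X : Matrix (Fin d) (Fin k) ℝ) : Submodule ℝ (Fin d → ℝ) :=
  Submodule.span ℝ (Set.range Xᵀ)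

/-- The orbit polytope `K_F` of a tuple of matrices. -/
def orbitPolytope (F : ∀ i : Fin n, Matrix (Fin d) (Fin (m i)) ℝ) : Set (Fin n → ℝ) :=
  {c | (∀ i, 0 ≤ c i) ∧ (∑ i, c i = d) ∧
    ∀ I : Finset (Fin n),
      ∑ i ∈ I, c i ≤ (Module.finrank ℝ ↥(⨆ i ∈ I, colSpan (F i)) : ℝ)}

/-- `Φ_F(t) = log det (∑ e^{tᵢ} Xᵢ Xᵢᵀ)`. -/
noncomputable def Phi (F : ∀ i : Fin n, Matrix (Fin d) (Fin (m i)) ℝ) (t : Fin n → ℝ) : ℝ :=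
  Real.log (∑ i, Real.exp (t i) • (F i * (F i)ᵀ)).det

/-- The objective function `Φ_F(t) - ⟨t, c⟩` whose infimum over `t` is `f_F(c)`. -/
noncomputable def obj (F : ∀ i : Fin n, Matrix (Fin d) (Fin (m i)) ℝ)
    (c : Fin n → ℝ) (t : Fin n → ℝ) : ℝ :=
  Phi F t - ∑ i, t i * c i

/-- `Δ_S` for `S ∈ 𝒜`, where `S` is encoded as a function `σ` assigning to each `i` a subset
`σ i ⊆ {1,…,dᵢ}` of the columns of `Xᵢ` (with `i ∈ S` iff `σ i ≠ ∅`). -/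
noncomputable def Delta (F : ∀ i : Fin n, Matrix (Fin d) (Fin (m i)) ℝ)
    (σ : ∀ i : Fin n, Finset (Fin (m i))) : ℝ :=
  (∑ i, ∑ k ∈ σ i, Matrix.of (fun r s : Fin d => F i r k * F i s k)).det

/-- The index set `𝒜`: collections of subsets of columns with `d` columns in total. -/
def indexA (d : ℕ) (m : Fin n → ℕ) : Finset (∀ i : Fin n, Finset (Fin (m i))) :=
  Finset.univ.filter fun σ => (∑ i, (σ i).card) = d

/-- Membership in the semialgebraic set `𝕍(F, c)`.  (Summing `(σ i).card • ⋯` over all of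
`𝒜` is the same as summing `|Sᵢ| • ⋯` over those `S ∈ 𝒜` with `i ∈ S`.) -/
noncomputable def inVariety (F : ∀ i : Fin n, Matrix (Fin d) (Fin (m i)) ℝ)
    (c ξ : Fin n → ℝ) : Prop :=
  (∀ i, 0 < ξ i) ∧ ∀ i,
    (∑ σ ∈ indexA d m, ((σ i).card : ℝ) * (∏ l, ξ l ^ (σ l).card) * Delta F σ)
      = c i * ∑ σ ∈ indexA d m, (∏ l, ξ l ^ (σ l).card) * Delta F σ

/-- `A` transforms `(F, c)` into a radial isotropic frame. -/
noncomputable def TransformsToRIF (F : ∀ i : Fin n, Matrix (Fin d) (Fin (m i)) ℝ)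
    (c : Fin n → ℝ) (A : Matrix (Fin d) (Fin d) ℝ) : Prop :=
  ∑ i, (c i / frobSq (A * F i)) • ((A * F i) * (A * F i)ᵀ) = 1

/-- Columns of `X` all orthogonal to the subspace `T`, i.e. `Col(X) ⊆ T^⊥`. -/
def colsPerp {k : ℕ} (X : Matrix (Fin d) (Fin k) ℝ) (T : Submodule ℝ (Fin d → ℝ)) : Prop :=
  ∀ x ∈ T, Xᵀ.mulVec x = 0

end MFrames

namespace MFrames

section CB
open Finset Equiv
set_option linter.unusedSectionVars false

open Matrix Finset Equiv

set_option linter.unusedSectionVars false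

variable {d : ℕ} {P : Type*} [Fintype P] [DecidableEq P]

theorem cb_aux (M : Matrix (Fin d) P ℝ) (N : Matrix P (Fin d) ℝ) :
    (M * N).det = ∑ f : Fin d → P, (M.submatrix id f).det * ∏ i, N (f i) i := by
  simp only [det_apply', mul_apply, prod_univ_sum, mul_sum, Fintype.piFinset_univ]
  rw [Finset.sum_comm]
  refine Finset.sum_congr rfl fun f _ => ?_
  rw [Finset.sum_mul]
  refine Finset.sum_congr rfl fun σ _ => ?_
  rw [prod_mul_distrib, mul_assoc]
  rfl

theorem cauchy_binet (M : Matrix (Fin d) P ℝ) (N : Matrix P (Fin d) ℝ) :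
    (d.factorial : ℝ) * (M * N).det
      = ∑ f : Fin d → P, (M.submatrix id f).det * (N.submatrix f id).det := by
  have key : ∀ τ : Equiv.Perm (Fin d),
      (M * N).det = ∑ f : Fin d → P,
        (M.submatrix id f).det * (((Equiv.Perm.sign τ : ℤ) : ℝ) * ∏ i, N (f (τ i)) i) := by
    intro τ
    set E : (Fin d → P) ≃ (Fin d → P) := Equiv.arrowCongr τ (Equiv.refl P) with hE
    rw [cb_aux]
    rw [← Equiv.sum_comp E (fun f : Fin d → P =>
      (M.submatrix id f).det * (((Equiv.Perm.sign τ : ℤ) : ℝ) * ∏ i, N (f (τ i)) i))]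
    refine Finset.sum_congr rfl fun g _ => ?_
    have hEg : E g = g ∘ ⇑τ.symm := rfl
    have h1 : (M.submatrix id (g ∘ ⇑τ.symm)).det
        = ((Equiv.Perm.sign τ : ℤ) : ℝ) * (M.submatrix id g).det := by
      rw [show M.submatrix id (g ∘ ⇑τ.symm) = (M.submatrix id g).submatrix id ⇑τ.symm by
        ext i j; simp [Matrix.submatrix_apply]]
      rw [Matrix.det_permute' τ.symm, Equiv.Perm.sign_symm]
    have h2 : (∏ i, N ((g ∘ ⇑τ.symm) (τ i)) i) = ∏ i, N (g i) i :=
      Finset.prod_congr rfl fun i _ => by simp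
    rw [hEg, h1, h2]
    have hs : ((Equiv.Perm.sign τ : ℤ) : ℝ) * ((Equiv.Perm.sign τ : ℤ) : ℝ) = 1 := by
      rcases Int.units_eq_one_or (Equiv.Perm.sign τ) with h | h <;> simp [h]
    calc (M.submatrix id g).det * ∏ i, N (g i) i
        = (((Equiv.Perm.sign τ : ℤ) : ℝ) * ((Equiv.Perm.sign τ : ℤ) : ℝ))
            * ((M.submatrix id g).det * ∏ i, N (g i) i) := by rw [hs, one_mul]
      _ = _ := by ring
  calc (d.factorial : ℝ) * (M * N).det
      = ∑ _τ : Equiv.Perm (Fin d), (M * N).det := by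
        rw [Finset.sum_const, card_univ, Fintype.card_perm, Fintype.card_fin, nsmul_eq_mul]
    _ = ∑ τ : Equiv.Perm (Fin d), ∑ f : Fin d → P,
          (M.submatrix id f).det * (((Equiv.Perm.sign τ : ℤ) : ℝ) * ∏ i, N (f (τ i)) i) :=
        Finset.sum_congr rfl fun τ _ => key τ
    _ = ∑ f : Fin d → P, (M.submatrix id f).det
          * ∑ τ : Equiv.Perm (Fin d), ((Equiv.Perm.sign τ : ℤ) : ℝ) * ∏ i, N (f (τ i)) i := by
        rw [Finset.sum_comm]; exact Finset.sum_congr rfl fun f _ => by rw [Finset.mul_sum]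
    _ = ∑ f : Fin d → P, (M.submatrix id f).det * (N.submatrix f id).det :=
        Finset.sum_congr rfl fun f _ => by rw [det_apply' (N.submatrix f id)]; rfl

theorem gram_expand (M : Matrix (Fin d) P ℝ) (w : P → ℝ) :
    (d.factorial : ℝ) * (Matrix.of fun r s => ∑ p, w p * (M r p * M s p)).det
      = ∑ f : Fin d → P, (∏ r, w (f r)) * (M.submatrix id f).det ^ 2 := by
  have hMN : (Matrix.of fun r s => ∑ p, w p * (M r p * M s p))
      = M * (Matrix.of fun p s => w p * M s p) := by
    ext r s
    simp only [Matrix.mul_apply, Matrix.of_apply]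
    exact Finset.sum_congr rfl fun p _ => by ring
  rw [hMN, cauchy_binet]
  refine Finset.sum_congr rfl fun f _ => ?_
  have hN : ((Matrix.of fun p s => w p * M s p).submatrix f id)
      = Matrix.of fun r s => (fun r => w (f r)) r * ((M.submatrix id f)ᵀ r s) := by
    ext r s; simp
  rw [hN, Matrix.det_mul_column, Matrix.det_transpose]
  ring

theorem det_expand {n : ℕ} {m : Fin n → ℕ} (F : ∀ i : Fin n, Matrix (Fin d) (Fin (m i)) ℝ)
    (ξ : Fin n → ℝ) :
    (∑ l, ξ l • (F l * (F l)ᵀ)).det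
      = ∑ σ ∈ indexA d m, (∏ l, ξ l ^ (σ l).card) * Delta F σ := by
  classical
  set M : Matrix (Fin d) ((i : Fin n) × Fin (m i)) ℝ := Matrix.of fun r p => F p.1 r p.2 with hM
  have hfac : (d.factorial : ℝ) ≠ 0 := Nat.cast_ne_zero.mpr (Nat.factorial_ne_zero d)
  refine mul_left_cancel₀ hfac ?_
  have h1 : (∑ l, ξ l • (F l * (F l)ᵀ))
      = Matrix.of fun r s => ∑ p : (i : Fin n) × Fin (m i), ξ p.1 * (M r p * M s p) := by
    ext r s
    rw [Matrix.of_apply, ← Finset.univ_sigma_univ, Finset.sum_sigma]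
    simp only [Matrix.sum_apply, Matrix.smul_apply, Matrix.mul_apply, Matrix.transpose_apply,
      smul_eq_mul, Finset.mul_sum, hM, Matrix.of_apply]
  have h2 : ∀ σ : ∀ i : Fin n, Finset (Fin (m i)),
      Delta F σ = (Matrix.of fun r s => ∑ p : (i : Fin n) × Fin (m i),
        (if p.2 ∈ σ p.1 then (1:ℝ) else 0) * (M r p * M s p)).det := by
    intro σ
    unfold Delta
    congr 1
    ext r s
    rw [Matrix.of_apply, ← Finset.univ_sigma_univ, Finset.sum_sigma]
    simp only [Matrix.sum_apply, Matrix.of_apply, hM, boole_mul]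
    refine Finset.sum_congr rfl fun i _ => ?_
    rw [← Finset.sum_filter, Finset.filter_mem_eq_inter, Finset.univ_inter]
  rw [h1, gram_expand]
  have h3 : (d.factorial : ℝ) * ∑ σ ∈ indexA d m, (∏ l, ξ l ^ (σ l).card) * Delta F σ
      = ∑ σ ∈ indexA d m, ∑ f : Fin d → ((i : Fin n) × Fin (m i)),
          (if ∀ r, (f r).2 ∈ σ (f r).1 then
            (∏ l, ξ l ^ (σ l).card) * (M.submatrix id f).det ^ 2 else 0) := by
    rw [Finset.mul_sum]
    refine Finset.sum_congr rfl fun σ _ => ?_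
    rw [h2 σ, mul_left_comm, gram_expand, Finset.mul_sum]
    refine Finset.sum_congr rfl fun f _ => ?_
    rw [Finset.prod_boole]
    by_cases h : ∀ r, (f r).2 ∈ σ (f r).1 <;> simp [h]
  rw [h3, Finset.sum_comm]
  refine Finset.sum_congr rfl fun f _ => ?_
  by_cases hinj : Function.Injective f
  · -- unique σ
    set σf : ∀ i : Fin n, Finset (Fin (m i)) :=
      fun i => Finset.univ.filter fun k => (⟨i, k⟩ : (i : Fin n) × Fin (m i)) ∈
        Finset.univ.image f with hσf
    have hsigma : Finset.univ.sigma σf = Finset.univ.image f := by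
      ext ⟨i, k⟩
      simp [hσf, Finset.mem_sigma, Finset.mem_filter]
    have hcardim : (Finset.univ.image f).card = d := by
      rw [Finset.card_image_of_injective _ hinj, Finset.card_univ, Fintype.card_fin]
    have hcard : (∑ i, (σf i).card) = d := by
      rw [← Finset.card_sigma, hsigma, hcardim]
    have hmemA : σf ∈ indexA d m := by
      simp [indexA, hcard]
    have hcond : ∀ r, (f r).2 ∈ σf (f r).1 := by
      intro r
      simp only [hσf, Finset.mem_filter, Finset.mem_univ, true_and]
      rw [Sigma.eta]
      exact Finset.mem_image_of_mem f (Finset.mem_univ r)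
    have hval : (∏ l, ξ l ^ (σf l).card) = ∏ r, ξ (f r).1 := by
      have : (∏ l, ξ l ^ (σf l).card) = ∏ p ∈ Finset.univ.sigma σf, ξ p.1 := by
        rw [Finset.prod_sigma]
        exact Finset.prod_congr rfl fun l _ => (Finset.prod_const (ξ l)).symm
      rw [this, hsigma, Finset.prod_image (fun a _ b _ h => hinj h)]
    have huniq : ∀ σ ∈ indexA d m, (∀ r, (f r).2 ∈ σ (f r).1) → σ = σf := by
      intro σ hσA hσ
      have hsub : Finset.univ.image f ⊆ Finset.univ.sigma σ := by
        intro p hp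
        obtain ⟨r, _, rfl⟩ := Finset.mem_image.mp hp
        exact Finset.mem_sigma.mpr ⟨Finset.mem_univ _, hσ r⟩
      have hcards : (Finset.univ.sigma σ).card = (Finset.univ.image f).card := by
        rw [Finset.card_sigma, hcardim]
        simpa [indexA] using hσA
      have heq : Finset.univ.image f = Finset.univ.sigma σ :=
        Finset.eq_of_subset_of_card_le hsub (le_of_eq hcards)
      funext i
      ext k
      have : k ∈ σ i ↔ (⟨i, k⟩ : (i : Fin n) × Fin (m i)) ∈ Finset.univ.sigma σ := by
        simp [Finset.mem_sigma]
      rw [this, ← heq, ← hsigma]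
      simp [hσf, Finset.mem_sigma, Finset.mem_filter, hsigma]
    rw [Finset.sum_eq_single_of_mem σf hmemA]
    · rw [if_pos hcond, hval]
    · intro σ hσA hne
      rw [if_neg]
      intro hcond'
      exact hne (huniq σ hσA hcond')
  · -- determinant vanishes
    have hD : (M.submatrix id f).det = 0 := by
      rw [Function.not_injective_iff] at hinj
      obtain ⟨a, b, hab, hne⟩ := hinj
      refine Matrix.det_zero_of_column_eq hne fun r => ?_
      simp [Matrix.submatrix_apply, hab]
    simp [hD]

theorem key_identity {n : ℕ} {m : Fin n → ℕ} (F : ∀ i : Fin n, Matrix (Fin d) (Fin (m i)) ℝ)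
    (ξ : Fin n → ℝ)
    (hdet : IsUnit (∑ l, ξ l • (F l * (F l)ᵀ)).det) (i : Fin n) :
    ∑ σ ∈ indexA d m, ((σ i).card : ℝ) * (∏ l, ξ l ^ (σ l).card) * Delta F σ
      = ξ i * ((∑ l, ξ l • (F l * (F l)ᵀ)).det
          * ((∑ l, ξ l • (F l * (F l)ᵀ))⁻¹ * (F i * (F i)ᵀ)).trace) := by
  classical
  set B : Fin n → Matrix (Fin d) (Fin d) ℝ := fun l => F l * (F l)ᵀ with hB
  set Q : Matrix (Fin d) (Fin d) ℝ := ∑ l, ξ l • B l with hQdef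
  set C : Matrix (Fin d) (Fin d) ℝ := Q⁻¹ * B i with hC
  set q : Polynomial ℝ :=
    (Matrix.det (1 + (Polynomial.X : Polynomial ℝ) • C.map Polynomial.C)).divX.divX with hq
  set g : ℝ → ℝ := fun s =>
    Q.det * (1 + C.trace * (s - ξ i) + q.eval (s - ξ i) * (s - ξ i) ^ 2) with hg
  set h : ℝ → ℝ := fun s => ∑ σ ∈ indexA d m,
    s ^ (σ i).card * ((∏ l ∈ Finset.univ.erase i, ξ l ^ (σ l).card) * Delta F σ) with hh
  have hsum_update : ∀ s : ℝ, (∑ l, (Function.update ξ i s) l • B l) = Q + (s - ξ i) • B i := by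
    intro s
    have hupd : (fun l => (Function.update ξ i s) l • B l)
        = Function.update (fun l => ξ l • B l) i (s • B i) := by
      funext l
      by_cases hl : l = i
      · subst hl; simp
      · simp [Function.update_of_ne hl]
    rw [hupd, Finset.sum_update_of_mem (Finset.mem_univ i)]
    rw [hQdef, ← Finset.add_sum_erase _ _ (Finset.mem_univ i), sub_smul,
      Finset.sdiff_singleton_eq_erase]
    abel
  have hgh : g = h := by
    funext s
    have e1 : Q + (s - ξ i) • B i = Q * (1 + (s - ξ i) • C) := by
      rw [mul_add, mul_one, hC, Matrix.mul_smul, ← Matrix.mul_assoc,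
        Matrix.mul_nonsing_inv Q hdet, Matrix.one_mul]
    have e2 : g s = (Q + (s - ξ i) • B i).det := by
      rw [e1, Matrix.det_mul, hg, Matrix.det_one_add_smul]
    rw [hh]
    simp only []
    rw [e2, ← hsum_update s, det_expand]
    refine Finset.sum_congr rfl fun σ _ => ?_
    rw [← Finset.mul_prod_erase Finset.univ
      (fun l => Function.update ξ i s l ^ (σ l).card) (Finset.mem_univ i),
      Function.update_self, mul_assoc]
    have hprod : (∏ l ∈ Finset.univ.erase i, Function.update ξ i s l ^ (σ l).card)
        = ∏ l ∈ Finset.univ.erase i, ξ l ^ (σ l).card :=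
      Finset.prod_congr rfl fun l hl => by
        rw [Function.update_of_ne (Finset.ne_of_mem_erase hl)]
    rw [hprod]
  have hu : HasDerivAt (fun s : ℝ => s - ξ i) 1 (ξ i) := (hasDerivAt_id (ξ i)).sub_const _
  have h1 : HasDerivAt (fun s : ℝ => C.trace * (s - ξ i)) C.trace (ξ i) := by
    simpa using hu.const_mul C.trace
  have h2 : HasDerivAt (fun s : ℝ => q.eval (s - ξ i))
      (q.derivative.eval 0) (ξ i) := by
    have hp := Polynomial.hasDerivAt (q.comp (Polynomial.X - Polynomial.C (ξ i))) (ξ i)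
    have hfeq : (fun s : ℝ => (q.comp (Polynomial.X - Polynomial.C (ξ i))).eval s)
        = fun s : ℝ => q.eval (s - ξ i) := by
      funext s; simp [Polynomial.eval_comp]
    rw [hfeq] at hp
    refine hp.congr_deriv ?_
    simp [Polynomial.derivative_comp, Polynomial.eval_comp]
  have h3 : HasDerivAt (fun s : ℝ => (s - ξ i) ^ 2) 0 (ξ i) := by
    have := hu.fun_pow 2
    simpa using this
  have h4 : HasDerivAt (fun s : ℝ => q.eval (s - ξ i) * (s - ξ i) ^ 2) 0 (ξ i) := by
    have := h2.fun_mul h3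
    simpa using this
  have hgd : HasDerivAt g (Q.det * C.trace) (ξ i) := by
    have hinner : HasDerivAt (fun s : ℝ =>
        1 + C.trace * (s - ξ i) + q.eval (s - ξ i) * (s - ξ i) ^ 2) C.trace (ξ i) := by
      have := ((hasDerivAt_const (ξ i) (1 : ℝ)).fun_add h1).fun_add h4
      simpa using this
    have := hinner.const_mul Q.det
    simpa using this
  have hhd : HasDerivAt h (∑ σ ∈ indexA d m,
      ((σ i).card : ℝ) * ξ i ^ ((σ i).card - 1)
        * ((∏ l ∈ Finset.univ.erase i, ξ l ^ (σ l).card) * Delta F σ)) (ξ i) := by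
    rw [hh]
    refine HasDerivAt.fun_sum fun σ _ => ?_
    have := (hasDerivAt_pow (σ i).card (ξ i)).mul_const
      ((∏ l ∈ Finset.univ.erase i, ξ l ^ (σ l).card) * Delta F σ)
    simpa [mul_assoc] using this
  rw [hgh] at hgd
  rw [hgd.unique hhd, Finset.mul_sum]
  refine Finset.sum_congr rfl fun σ _ => ?_
  rw [← Finset.mul_prod_erase Finset.univ (fun l => ξ l ^ (σ l).card) (Finset.mem_univ i)]
  rcases Nat.eq_zero_or_pos (σ i).card with hk | hk
  · simp [hk]
  · obtain ⟨k, hk'⟩ := Nat.exists_eq_succ_of_ne_zero (Nat.pos_iff_ne_zero.mp hk)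
    rw [hk']
    simp only [Nat.succ_sub_one, Nat.cast_succ, pow_succ]
    ring

end CB

theorem psd_sqrt_mul_self {k : Type*} [Fintype k] [DecidableEq k] {A : Matrix k k ℝ}
    (hA : A.PosSemidef) : hA.sqrt * hA.sqrt = A := by
  have hU : (star hA.1.eigenvectorUnitary : Matrix k k ℝ) * (hA.1.eigenvectorUnitary : Matrix k k ℝ) = 1 :=
    Unitary.coe_star_mul_self _
  conv_rhs => rw [hA.1.spectral_theorem]
  rw [Unitary.conjStarAlgAut_apply]
  unfold Matrix.PosSemidef.sqrt
  simp only [Matrix.mul_assoc]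
  rw [← Matrix.mul_assoc (star _ : Matrix k k ℝ) _, hU, Matrix.one_mul, ← Matrix.mul_assoc (diagonal _),
    diagonal_mul_diagonal]
  congr 3
  funext j
  simp [Real.mul_self_sqrt (hA.eigenvalues_nonneg j)]

theorem psd_sqrt_isHermitian {k : Type*} [Fintype k] [DecidableEq k] {A : Matrix k k ℝ}
    (hA : A.PosSemidef) : hA.sqrt.IsHermitian := by
  unfold Matrix.IsHermitian Matrix.PosSemidef.sqrt
  simp [Matrix.mul_assoc, star_eq_conjTranspose]

/-- **Theorem (Constructive aspects of RIFs), final claim.**  If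
`(e^{t*₁}, …, e^{t*ₙ}) ∈ 𝕍(F, c)` then `Q(t*)^{-1/2}` (the inverse of the positive
semidefinite square root of `Q(t*) = ∑ e^{t*ᵢ} Xᵢ Xᵢᵀ`) transforms `(F, c)` into a radial
isotropic frame. -/
theorem variety_gives_RIF {d n : ℕ} {m : Fin n → ℕ}
    (F : ∀ i : Fin n, Matrix (Fin d) (Fin (m i)) ℝ) (hF : IsMatrixFrame F)
    (c : Fin n → ℚ) (hc : ∀ i, 0 < c i) (hsum : ∑ i, (c i : ℝ) = d)
    (tstar : Fin n → ℝ)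
    (hmem : inVariety F (fun i => (c i : ℝ)) (fun i => Real.exp (tstar i)))
    (hQ : (∑ i, Real.exp (tstar i) • (F i * (F i)ᵀ)).PosSemidef) :
    (∀ i, hQ.sqrt⁻¹ * F i ≠ 0) ∧
      TransformsToRIF F (fun i => (c i : ℝ)) hQ.sqrt⁻¹ := by
  classical
  obtain ⟨hpos, hvar⟩ := hmem
  set ξ : Fin n → ℝ := fun l => Real.exp (tstar l) with hξdef
  set Q : Matrix (Fin d) (Fin d) ℝ := ∑ i, Real.exp (tstar i) • (F i * (F i)ᵀ) with hQdef
  have hQform : Q = ∑ l, ξ l • (F l * (F l)ᵀ) := rfl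
  have hξpos : ∀ l, 0 < ξ l := fun l => Real.exp_pos _
  have hdotsum : ∀ (G : Fin n → Matrix (Fin d) (Fin d) ℝ) (x : Fin d → ℝ),
      dotProduct x ((∑ l, G l) *ᵥ x) = ∑ l, dotProduct x (G l *ᵥ x) := by
    intro G x
    have hmv : (∑ l, G l) *ᵥ x = ∑ l, G l *ᵥ x := by
      ext j
      simp only [Matrix.mulVec, dotProduct, Matrix.sum_apply, Finset.sum_apply,
        Finset.sum_mul]
      rw [Finset.sum_comm]
    rw [hmv]
    simp only [dotProduct, Finset.sum_apply, Finset.mul_sum]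
    rw [Finset.sum_comm]
  have hBpsd : ∀ l x, 0 ≤ dotProduct x ((F l * (F l)ᵀ) *ᵥ x) := by
    intro l x
    have h := (posSemidef_iff_dotProduct_mulVec.mp (Matrix.posSemidef_self_mul_conjTranspose (F l))).2 x
    rw [Matrix.conjTranspose_eq_transpose_of_trivial] at h
    simpa using h
  have hQpd : Q.PosDef := by
    refine posDef_iff_dotProduct_mulVec.mpr ⟨hQ.1, fun x hx => ?_⟩
    have hfr := (posDef_iff_dotProduct_mulVec.mp hF).2 hx
    rw [star_trivial] at hfr ⊢
    unfold frameOp at hfr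
    rw [hdotsum] at hfr
    obtain ⟨l₀, -, hl₀⟩ := Finset.exists_lt_of_sum_lt
      (by simpa using hfr : ∑ l : Fin n, (0 : ℝ) < ∑ l, dotProduct x ((F l * (F l)ᵀ) *ᵥ x))
    have key : ∀ l, (fun l => ξ l • (F l * (F l)ᵀ)) l *ᵥ x
        = ξ l • ((F l * (F l)ᵀ) *ᵥ x) := fun l => Matrix.smul_mulVec _ _ _
    have : dotProduct x (Q *ᵥ x) = ∑ l, ξ l * dotProduct x ((F l * (F l)ᵀ) *ᵥ x) := by
      rw [hQform, hdotsum]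
      refine Finset.sum_congr rfl fun l _ => ?_
      rw [key l, dotProduct_smul, smul_eq_mul]
    rw [this]
    have hterm : ∀ l ∈ Finset.univ, (0:ℝ) ≤ ξ l * dotProduct x ((F l * (F l)ᵀ) *ᵥ x) :=
      fun l _ => mul_nonneg (hξpos l).le (hBpsd l x)
    calc (0:ℝ) < ξ l₀ * dotProduct x ((F l₀ * (F l₀)ᵀ) *ᵥ x) :=
          mul_pos (hξpos l₀) hl₀
      _ ≤ ∑ l, ξ l * dotProduct x ((F l * (F l)ᵀ) *ᵥ x) :=
          Finset.single_le_sum hterm (Finset.mem_univ l₀)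
  have hdetQpos : 0 < Q.det := hQpd.det_pos
  have hdetQ : IsUnit Q.det := isUnit_iff_ne_zero.mpr hdetQpos.ne'
  set S : Matrix (Fin d) (Fin d) ℝ := hQ.sqrt with hSdef
  set A : Matrix (Fin d) (Fin d) ℝ := S⁻¹ with hAdef
  have hSS : S * S = Q := psd_sqrt_mul_self hQ
  have hdetS : S.det ≠ 0 := by
    intro h0
    rw [← hSS, Matrix.det_mul, h0, mul_zero] at hdetQpos
    exact lt_irrefl _ hdetQpos
  have hSunit : IsUnit S.det := isUnit_iff_ne_zero.mpr hdetS
  have hST : Sᵀ = S := by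
    have h := psd_sqrt_isHermitian hQ
    rw [← Matrix.conjTranspose_eq_transpose_of_trivial]
    exact h
  have hAT : Aᵀ = A := by rw [hAdef, Matrix.transpose_nonsing_inv, hST]
  have hSA : S * A = 1 := Matrix.mul_nonsing_inv S hSunit
  have hAS : A * S = 1 := Matrix.nonsing_inv_mul S hSunit
  have hQinv : Q⁻¹ = A * A := by rw [← hSS, Matrix.mul_inv_rev]
  have hfrobtr : ∀ {k : ℕ} (Y : Matrix (Fin d) (Fin k) ℝ), (Y * Yᵀ).trace = frobSq Y := by
    intro k Y
    unfold frobSq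
    simp only [Matrix.trace, Matrix.diag, Matrix.mul_apply, Matrix.transpose_apply, sq]
  have htr : ∀ i, (Q⁻¹ * (F i * (F i)ᵀ)).trace = frobSq (A * F i) := by
    intro i
    rw [hQinv]
    have e : A * A * (F i * (F i)ᵀ) = A * ((A * F i) * (F i)ᵀ) := by
      rw [Matrix.mul_assoc, Matrix.mul_assoc]
    rw [e, Matrix.trace_mul_comm, Matrix.mul_assoc]
    have e2 : (F i)ᵀ * A = (A * F i)ᵀ := by rw [Matrix.transpose_mul, hAT]
    rw [e2, hfrobtr]
  have hkey : ∀ i, ξ i * frobSq (A * F i) = (c i : ℝ) := by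
    intro i
    have h1 := key_identity F ξ (by rw [← hQform]; exact hdetQ) i
    have h2 := det_expand F ξ
    have h3 := hvar i
    rw [← hQform] at h1 h2
    rw [h1, htr i, ← h2] at h3
    have h4 : ξ i * frobSq (A * F i) * Q.det = (c i : ℝ) * Q.det := by linear_combination h3
    exact mul_right_cancel₀ hdetQpos.ne' h4
  have hfrobpos : ∀ i, 0 < frobSq (A * F i) := by
    intro i
    have h := hkey i
    have hci : (0:ℝ) < (c i : ℝ) := by exact_mod_cast hc i
    nlinarith [hξpos i]
  have hnz : ∀ i, A * F i ≠ 0 := by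
    intro i h0
    have := hfrobpos i
    rw [h0] at this
    simp [frobSq] at this
  refine ⟨hnz, ?_⟩
  unfold TransformsToRIF
  have hcoef : ∀ i, (c i : ℝ) / frobSq (A * F i) = ξ i := by
    intro i
    rw [← hkey i, mul_div_assoc, div_self (hfrobpos i).ne', mul_one]
  calc ∑ i, ((c i : ℝ) / frobSq (A * F i)) • ((A * F i) * (A * F i)ᵀ)
      = ∑ i, ξ i • (A * (F i * (F i)ᵀ) * A) := by
        refine Finset.sum_congr rfl fun i _ => ?_
        rw [hcoef i, Matrix.transpose_mul, hAT]
        congr 1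
        rw [Matrix.mul_assoc, Matrix.mul_assoc, Matrix.mul_assoc]
    _ = A * Q * A := by
        rw [hQform, Finset.mul_sum, Finset.sum_mul]
        refine Finset.sum_congr rfl fun i _ => ?_
        rw [Matrix.mul_smul, Matrix.smul_mul]
    _ = 1 := by rw [← hSS, ← Matrix.mul_assoc A S S, hAS, Matrix.one_mul, hSA]


end MFrames
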